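/- Let M be an (n+1)×(p+1) matrix over a field F, written in block form M = [[A, C], [B, d]] where A is the top-left n×p block, C is an n×1 column, B is a 1×p row, and d is a scalar. If rank(M) ≤ r and rank(M + E) ≤ r, where E is the matrix with 1 in the bottom-right entry and 0 elsewhere, then rank(A) ≤ r − 1. -/

import Mathlib

open Matrix

namespace ExtractionAux

variable {F : Type*} [Field F]

lemma range_del_col_le {m p : ℕ} (N : Matrix (Fin m) (Fin (p + 1)) F) :
    LinearMap.range (N.submatrix id Fin.castSucc).mulVecLin ≤
      LinearMap.range N.mulVecLin := by
  rintro _ ⟨v, rfl⟩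
  refine ⟨Fin.snoc v 0, ?_⟩
  ext i
  simp [Matrix.mulVecLin_apply, Matrix.mulVec, dotProduct, Fin.sum_univ_castSucc]

lemma rank_del_col_le {m p : ℕ} (N : Matrix (Fin m) (Fin (p + 1)) F) :
    (N.submatrix id Fin.castSucc).rank ≤ N.rank :=
  Submodule.finrank_mono (range_del_col_le N)

lemma rank_del_row_le {m p : ℕ} (N : Matrix (Fin (m + 1)) (Fin p) F) :
    (N.submatrix Fin.castSucc id).rank ≤ N.rank := by
  have h : (N.submatrix Fin.castSucc id)ᵀ = Nᵀ.submatrix id Fin.castSucc := rfl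
  rw [← Matrix.rank_transpose (N.submatrix Fin.castSucc id), h, ← Matrix.rank_transpose N]
  exact rank_del_col_le Nᵀ

lemma last_col_comb {m p : ℕ} (N : Matrix (Fin m) (Fin (p + 1)) F)
    (h : N.rank ≤ (N.submatrix id Fin.castSucc).rank) :
    ∃ x : Fin p → F, ∀ i, ∑ j, N i j.castSucc * x j = N i (Fin.last p) := by
  have heq : LinearMap.range (N.submatrix id Fin.castSucc).mulVecLin =
      LinearMap.range N.mulVecLin :=
    Submodule.eq_of_le_of_finrank_le (range_del_col_le N) h
  have hmem : (fun i => N i (Fin.last p)) ∈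
      LinearMap.range (N.submatrix id Fin.castSucc).mulVecLin := by
    rw [heq]
    refine ⟨Pi.single (Fin.last p) 1, ?_⟩
    ext i
    simp [Matrix.mulVecLin_apply, Matrix.mulVec_single]
  obtain ⟨x, hx⟩ := hmem
  refine ⟨x, fun i => ?_⟩
  have := congrFun hx i
  simpa [Matrix.mulVecLin_apply, Matrix.mulVec, dotProduct] using this

end ExtractionAux

/-- Extraction lemma: if `M` and `M + E_{n+1,p+1}` both have rank at most `r`,
then the top-left `n × p` block of `M` has rank at most `r - 1`. -/
theorem extraction_lemma (F : Type*) [Field F] (n p r : ℕ) (hr : 1 ≤ r)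
    (M : Matrix (Fin (n + 1)) (Fin (p + 1)) F)
    (h1 : M.rank ≤ r)
    (h2 : (M + Matrix.single (Fin.last n) (Fin.last p) 1).rank ≤ r) :
    (M.submatrix Fin.castSucc Fin.castSucc).rank ≤ r - 1 := by
  set A := M.submatrix Fin.castSucc Fin.castSucc with hA
  set N := M + Matrix.single (Fin.last n) (Fin.last p) 1 with hN
  set M' := M.submatrix id Fin.castSucc with hM'
  -- entries of N off the corner agree with M
  have hNcol : ∀ (i : Fin (n + 1)) (j : Fin p), N i j.castSucc = M i j.castSucc := by
    intro i j
    have : (j.castSucc : Fin (p + 1)) ≠ Fin.last p := (Fin.castSucc_lt_last j).ne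
    have h0 : Matrix.single (Fin.last n) (Fin.last p) (1 : F) i j.castSucc = 0 :=
      Matrix.single_apply_of_ne _ _ _ _ _ (fun h2 => this h2.2.symm)
    simp [hN, Matrix.add_apply, h0]
  have hNrow : ∀ i : Fin n, N i.castSucc (Fin.last p) = M i.castSucc (Fin.last p) := by
    intro i
    have : (i.castSucc : Fin (n + 1)) ≠ Fin.last n := (Fin.castSucc_lt_last i).ne
    have h0 : Matrix.single (Fin.last n) (Fin.last p) (1 : F) i.castSucc (Fin.last p) = 0 :=
      Matrix.single_apply_of_ne _ _ _ _ _ (fun h2 => this h2.1.symm)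
    simp [hN, Matrix.add_apply, h0]
  have hNlast : N (Fin.last n) (Fin.last p) = M (Fin.last n) (Fin.last p) + 1 := by
    simp [hN]
  have hNsub : N.submatrix id Fin.castSucc = M' := by
    ext i j
    simp [hM', hNcol i j]
  -- argue by contradiction : suppose r ≤ A.rank
  by_contra hcon
  push_neg at hcon
  have hler : r ≤ A.rank := by omega
  have hAM' : A.rank ≤ M'.rank := by
    have : A = M'.submatrix Fin.castSucc id := rfl
    rw [this]
    exact ExtractionAux.rank_del_row_le M'
  have hM'M : M'.rank ≤ M.rank := ExtractionAux.rank_del_col_le M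
  have hMrank : M.rank = r := le_antisymm h1 (by omega)
  have hM'rank : M'.rank = r := le_antisymm (by omega) (by omega)
  have hArank : A.rank = r := le_antisymm (by omega) hler
  -- column relation for M
  obtain ⟨x, hx⟩ := ExtractionAux.last_col_comb M (by rw [← hM']; omega)
  -- column relation for N
  obtain ⟨x', hx'⟩ := ExtractionAux.last_col_comb N (by rw [hNsub, hM'rank]; omega)
  -- row relation : last row of M' in row span of A, via transpose
  obtain ⟨y, hy⟩ := ExtractionAux.last_col_comb M'ᵀ (by
    have h1' : (M'ᵀ).rank = r := by rw [Matrix.rank_transpose]; exact hM'rank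
    have h2' : (M'ᵀ.submatrix id Fin.castSucc) = Aᵀ := rfl
    rw [h1', h2', Matrix.rank_transpose, hArank])
  -- hy : ∀ j : Fin p, ∑ i, M'ᵀ j i.castSucc * y i = M'ᵀ j (Fin.last n)
  have hrow : ∀ j : Fin p, ∑ i : Fin n, M i.castSucc j.castSucc * y i
      = M (Fin.last n) j.castSucc := by
    intro j
    have := hy j
    simpa [hM', Matrix.transpose_apply, Fin.snoc] using this
  -- key computation
  have key : ∀ z : Fin p → F,
      (∀ i : Fin n, ∑ j, M i.castSucc j.castSucc * z j = M i.castSucc (Fin.last p)) →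
      ∑ j, M (Fin.last n) j.castSucc * z j
        = ∑ i : Fin n, y i * M i.castSucc (Fin.last p) := by
    intro z hz
    calc ∑ j, M (Fin.last n) j.castSucc * z j
        = ∑ j, (∑ i : Fin n, M i.castSucc j.castSucc * y i) * z j := by
          refine Finset.sum_congr rfl fun j _ => ?_
          rw [hrow j]
      _ = ∑ i : Fin n, y i * ∑ j, M i.castSucc j.castSucc * z j := by
          simp only [Finset.sum_mul, Finset.mul_sum]
          rw [Finset.sum_comm]
          exact Finset.sum_congr rfl fun i _ => Finset.sum_congr rfl fun j _ => by ring
      _ = ∑ i : Fin n, y i * M i.castSucc (Fin.last p) := by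
          refine Finset.sum_congr rfl fun i _ => ?_
          rw [hz i]
  -- apply to M
  have hd : ∑ j, M (Fin.last n) j.castSucc * x j = M (Fin.last n) (Fin.last p) := by
    simpa using hx (Fin.last n)
  have hM_eq := key x (fun i => by simpa using hx i.castSucc)
  -- apply to N
  have hd' : ∑ j, M (Fin.last n) j.castSucc * x' j = M (Fin.last n) (Fin.last p) + 1 := by
    have := hx' (Fin.last n)
    rw [hNlast] at this
    calc ∑ j, M (Fin.last n) j.castSucc * x' j
        = ∑ j, N (Fin.last n) j.castSucc * x' j :=
          Finset.sum_congr rfl fun j _ => by rw [hNcol]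
      _ = M (Fin.last n) (Fin.last p) + 1 := this
  have hN_eq := key x' (fun i => by
    have := hx' i.castSucc
    rw [hNrow i] at this
    calc ∑ j, M i.castSucc j.castSucc * x' j
        = ∑ j, N i.castSucc j.castSucc * x' j :=
          Finset.sum_congr rfl fun j _ => by rw [hNcol]
      _ = M i.castSucc (Fin.last p) := this)
  rw [hd] at hM_eq
  rw [hd'] at hN_eq
  have : M (Fin.last n) (Fin.last p) = M (Fin.last n) (Fin.last p) + 1 :=
    hM_eq.trans hN_eq.symm
  simp at this
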